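/- For every positive integer M, every j ∈ ℤ, every τ in the upper half-plane, and every z ∈ ℂ at which all theta values occurring in denominators below are nonzero: Ψ^{[M;0]}_{j,j}(τ, z, z, 0) / R^{R,−}(τ, z) = −q^{j²/M} e^{(4πi/M) j z} · [ϑ₀₀(Mτ, z + jτ) ϑ₀₁(Mτ, z + jτ) ϑ₁₀(Mτ, z + jτ) / ϑ₁₁(Mτ, z + jτ)] · [ϑ₁₁(τ, z) / (ϑ₀₀(τ, z) ϑ₀₁(τ, z) ϑ₁₀(τ, z))]. -/

import Mathlib

open Complex

/-- Jacobi theta function with characteristics `a b ∈ {0,1}` (allowing real characteristics):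
`ϑ_{ab}(τ, z) = Σ_{n ∈ ℤ} exp(πi(n + a/2)²τ + 2πi(n + a/2)(z + b/2))`. -/
noncomputable def jTheta (a b : ℝ) (τ z : ℂ) : ℂ :=
  ∑' n : ℤ, Complex.exp ((Real.pi : ℂ) * I * ((n : ℂ) + (a : ℂ) / 2) ^ 2 * τ +
    2 * (Real.pi : ℂ) * I * ((n : ℂ) + (a : ℂ) / 2) * (z + (b : ℂ) / 2))

/-- Dedekind eta function `η(τ) = e^{πiτ/12} Π_{n=1}^∞ (1 - q^n)`, `q = e^{2πiτ}`. -/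
noncomputable def dedekindEta (τ : ℂ) : ℂ :=
  Complex.exp ((Real.pi : ℂ) * I * τ / 12) *
    ∏' n : ℕ, (1 - Complex.exp (2 * (Real.pi : ℂ) * I * τ) ^ (n + 1))

/-- The function `Ψ^{[M;ε]}_{j,k}(τ, z₁, z₂, t)` (the paper's `Ψ^{[M,1,0;ε]}_{j,k;ε'}` in closed
form for `m = 1`):
`-i e^{-2πit/M} q^{jk/M} e^{(2πi/M)(k z₁ + j z₂)} η(Mτ)³ ϑ₁₁(Mτ, z₁+z₂+(j+k)τ) /
  (ϑ₁₁(Mτ, z₁+jτ+ε) ϑ₁₁(Mτ, z₂+kτ-ε))` where `q = e^{2πiτ}`. -/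
noncomputable def Psi (M : ℕ) (ε j k : ℝ) (τ z₁ z₂ t : ℂ) : ℂ :=
  -I * Complex.exp (-(2 * (Real.pi : ℂ) * I * t) / (M : ℂ)) *
    Complex.exp (2 * (Real.pi : ℂ) * I * τ * ((j : ℂ) * (k : ℂ) / (M : ℂ))) *
    Complex.exp (2 * (Real.pi : ℂ) * I / (M : ℂ) * ((k : ℂ) * z₁ + (j : ℂ) * z₂)) *
    (dedekindEta ((M : ℂ) * τ)) ^ 3 *
    jTheta 1 1 ((M : ℂ) * τ) (z₁ + z₂ + ((j : ℂ) + (k : ℂ)) * τ) /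
    (jTheta 1 1 ((M : ℂ) * τ) (z₁ + (j : ℂ) * τ + (ε : ℂ)) *
     jTheta 1 1 ((M : ℂ) * τ) (z₂ + (k : ℂ) * τ - (ε : ℂ)))

/-- The N=4 twisted (Ramond) super-denominator `R^{R,-}(τ,z) = i η(τ)³ ϑ₁₁(τ,2z) / ϑ₁₁(τ,z)²`. -/
noncomputable def RRminus (τ z : ℂ) : ℂ :=
  I * (dedekindEta τ) ^ 3 * jTheta 1 1 τ (2 * z) / (jTheta 1 1 τ z) ^ 2


namespace JTPAux

open Finset Filter Topology

/-- Gaussian binomial coefficient, as a complex number. -/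
noncomputable def gb : ℕ → ℕ → ℂ → ℂ
  | 0, 0, _ => 1
  | 0, _+1, _ => 0
  | _+1, 0, _ => 1
  | n+1, k+1, q => gb n (k+1) q + q ^ (n - k) * gb n k q

@[simp] lemma gb_zero_right (n : ℕ) (q : ℂ) : gb n 0 q = 1 := by
  cases n <;> rfl

lemma gb_succ_succ (n k : ℕ) (q : ℂ) :
    gb (n+1) (k+1) q = gb n (k+1) q + q ^ (n - k) * gb n k q := rfl

lemma gb_eq_zero {n k : ℕ} (h : n < k) (q : ℂ) : gb n k q = 0 := by
  induction n generalizing k with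
  | zero => match k, h with | k+1, _ => rfl
  | succ n ih =>
    match k, h with
    | k+1, h =>
      rw [gb_succ_succ, ih (by omega), ih (by omega)]
      ring

lemma choose_two_succ (k : ℕ) : (k+1).choose 2 = k.choose 2 + k := by
  have h := Nat.choose_succ_succ k 1
  norm_num [Nat.choose_one_right] at h
  omega

lemma one_sub_pow_congr (q : ℂ) {a b : ℕ} (h : a = b) : (1 - q ^ a) = (1 - q ^ b) := by rw [h]

/-- The finite `q`-binomial theorem. -/
lemma gauss (q x : ℂ) (n : ℕ) : ∏ k ∈ range n, (1 + x * q ^ k)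
    = ∑ k ∈ range (n+1), gb n k q * q ^ (k.choose 2) * x ^ k := by
  induction n with
  | zero => simp
  | succ n ih =>
    rw [prod_range_succ, ih, mul_one_add]
    have h1 : ∑ k ∈ range (n+1), gb n k q * q ^ (k.choose 2) * x ^ k
        = 1 + ∑ k ∈ range (n+1), gb n (k+1) q * q ^ ((k+1).choose 2) * x ^ (k+1) := by
      rw [sum_range_succ' (f := fun k => gb n k q * q ^ (k.choose 2) * x ^ k),
        sum_range_succ (f := fun k => gb n (k+1) q * q ^ ((k+1).choose 2) * x ^ (k+1)),
        gb_eq_zero (Nat.lt_succ_self n)]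
      simp [add_comm]
    have h2 : (∑ k ∈ range (n+1), gb n k q * q ^ (k.choose 2) * x ^ k) * (x * q ^ n)
        = ∑ k ∈ range (n+1), q ^ (n - k) * gb n k q * q ^ ((k+1).choose 2) * x ^ (k+1) := by
      rw [sum_mul]
      refine sum_congr rfl fun k hk => ?_
      have hkn : k ≤ n := Nat.lt_succ_iff.mp (mem_range.mp hk)
      have he : k.choose 2 + n = (n - k) + (k+1).choose 2 := by
        rw [choose_two_succ]; omega
      calc gb n k q * q ^ (k.choose 2) * x ^ k * (x * q ^ n)
          = gb n k q * q ^ (k.choose 2 + n) * x ^ (k+1) := by rw [pow_add, pow_succ]; ring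
        _ = _ := by rw [he, pow_add]; ring
    have h3 : ∑ k ∈ range (n+1+1), gb (n+1) k q * q ^ (k.choose 2) * x ^ k
        = 1 + ∑ k ∈ range (n+1), gb (n+1) (k+1) q * q ^ ((k+1).choose 2) * x ^ (k+1) := by
      rw [sum_range_succ' (f := fun k => gb (n+1) k q * q ^ (k.choose 2) * x ^ k)]
      simp [add_comm]
    rw [h2, h1, h3, add_assoc]
    congr 1
    rw [← sum_add_distrib]
    exact sum_congr rfl fun k hk => by rw [gb_succ_succ]; ring

/-- Closed form for `gb`. -/
lemma gb_mul (q : ℂ) : ∀ n k, k ≤ n →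
    gb n k q * ∏ j ∈ range k, (1 - q ^ (j+1)) = ∏ j ∈ range k, (1 - q ^ (n - k + j + 1)) := by
  intro n
  induction n with
  | zero => intro k hk; interval_cases k; simp
  | succ n ih =>
    intro k hk
    match k with
    | 0 => simp
    | k+1 =>
      rcases Nat.lt_or_ge n (k+1) with h | h
      · have hkn : k = n := by omega
        subst hkn
        have hRHS : ∏ j ∈ range (k+1), (1 - q ^ (k + 1 - (k+1) + j + 1))
            = ∏ j ∈ range (k+1), (1 - q ^ (j + 1)) :=
          prod_congr rfl fun j _ => one_sub_pow_congr q (by omega)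
        have hIH : ∏ j ∈ range k, (1 - q ^ (k - k + j + 1))
            = ∏ j ∈ range k, (1 - q ^ (j + 1)) :=
          prod_congr rfl fun j _ => one_sub_pow_congr q (by omega)
        rw [hRHS, gb_succ_succ, gb_eq_zero (by omega), Nat.sub_self, pow_zero, zero_add, one_mul,
          prod_range_succ, ← mul_assoc, ih k le_rfl, hIH, ← prod_range_succ]
      · have IH1 := ih (k+1) h
        have IH2 := ih k (by omega)
        set P := ∏ j ∈ range k, (1 - q ^ (n - k + j + 1)) with hP
        have e1 : ∏ j ∈ range (k+1), (1 - q ^ (n - (k+1) + j + 1))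
            = (1 - q ^ (n - k)) * P := by
          rw [prod_range_succ' (f := fun j => 1 - q ^ (n - (k+1) + j + 1)), mul_comm]
          congr 1
          · exact one_sub_pow_congr q (by omega)
          · exact prod_congr rfl fun j _ => one_sub_pow_congr q (by omega)
        have e2 : ∏ j ∈ range (k+1), (1 - q ^ (n + 1 - (k+1) + j + 1))
            = P * (1 - q ^ (n+1)) := by
          rw [prod_range_succ]
          congr 1
          · exact prod_congr rfl fun j _ => one_sub_pow_congr q (by omega)
          · exact one_sub_pow_congr q (by omega)
        rw [gb_succ_succ]
        calc (gb n (k+1) q + q ^ (n-k) * gb n k q) * ∏ j ∈ range (k+1), (1 - q^(j+1))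
            = gb n (k+1) q * ∏ j ∈ range (k+1), (1 - q^(j+1))
              + q ^ (n-k) * (gb n k q * ∏ j ∈ range k, (1 - q^(j+1))) * (1 - q^(k+1)) := by
              rw [prod_range_succ]; ring
          _ = (1 - q ^ (n-k)) * P + q ^ (n-k) * P * (1 - q^(k+1)) := by rw [IH1, e1, IH2]
          _ = P * (1 - q ^ (n-k) * q ^ (k+1)) := by ring
          _ = P * (1 - q ^ (n+1)) := by
              rw [← pow_add, show n - k + (k+1) = n + 1 from by omega]
          _ = ∏ j ∈ range (k+1), (1 - q ^ (n + 1 - (k+1) + j + 1)) := e2.symm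


lemma two_mul_choose_two (k : ℕ) : 2 * k.choose 2 = k * (k - 1) := by
  induction k with
  | zero => rfl
  | succ k ih =>
    rw [choose_two_succ, Nat.mul_add, ih]
    cases k with
    | zero => rfl
    | succ m =>
      rw [Nat.add_sub_cancel, Nat.add_sub_cancel]
      ring

lemma int_two_mul_choose_two (i : ℕ) : 2 * ((i.choose 2 : ℤ)) = (i:ℤ) * ((i:ℤ) - 1) := by
  cases i with
  | zero => rfl
  | succ m =>
    have h := two_mul_choose_two (m+1)
    rw [Nat.add_sub_cancel] at h
    have h' : ((2 * (m+1).choose 2 : ℕ) : ℤ) = (((m+1) * m : ℕ) : ℤ) := by exact_mod_cast h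
    push_cast at h'
    push_cast
    linarith

lemma prod_zpow (Q : ℂ) (hQ : Q ≠ 0) (f : ℕ → ℤ) (N : ℕ) :
    ∏ k ∈ range N, Q ^ (f k) = Q ^ (∑ k ∈ range N, f k) := by
  induction N with
  | zero => simp
  | succ N ih => rw [prod_range_succ, sum_range_succ, ih, zpow_add₀ hQ]

lemma zpow_mul_pow (Q : ℂ) (hQ : Q ≠ 0) (a : ℤ) (b : ℕ) : Q ^ a * Q ^ b = Q ^ (a + b) := by
  rw [← zpow_natCast Q b, ← zpow_add₀ hQ]

lemma zpow_pow (Q : ℂ) (a : ℤ) (b : ℕ) : (Q ^ a) ^ b = Q ^ (a * b) := by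
  rw [← zpow_natCast (Q ^ a) b, ← zpow_mul]

lemma sum_odd_int (N : ℕ) : ∑ k ∈ range N, (2*(k:ℤ)+1) = N^2 := by
  induction N with
  | zero => simp
  | succ N ih => rw [sum_range_succ, ih]; push_cast; ring

/-- The symmetric form of the finite `q`-binomial theorem. -/
lemma Fsym (Q w : ℂ) (hQ : Q ≠ 0) (hw : w ≠ 0) (N : ℕ) :
    ∏ k ∈ range N, ((1 + Q ^ (2*k+1) * w) * (1 + Q ^ (2*k+1) * w⁻¹))
    = ∑ i ∈ range (2*N+1), gb (2*N) i (Q^2) * Q ^ (((i : ℤ) - N)^2) * w ^ ((i : ℤ) - N) := by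
  have hg := gauss (Q^2) (Q ^ ((1 : ℤ) - 2*N) * w) (2*N)
  have hsplit : ∏ k ∈ range (2*N), (1 + (Q ^ ((1 : ℤ) - 2*N) * w) * (Q^2) ^ k)
      = (Q ^ (-(N:ℤ)^2) * w ^ N * ∏ k ∈ range N, (1 + Q ^ (2*k+1) * w⁻¹))
        * ∏ k ∈ range N, (1 + Q ^ (2*k+1) * w) := by
    rw [show 2*N = N + N from by ring, prod_range_add]
    congr 1
    · -- first half
      have term : ∀ k ∈ range N, (1 + (Q ^ ((1 : ℤ) - 2*N) * w) * (Q^2) ^ k)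
          = (Q ^ (2*(k:ℤ)+1-2*N) * w) * (1 + Q ^ (2*(N-1-k)+1) * w⁻¹) := by
        intro k hk
        have hkN : k < N := mem_range.mp hk
        have e1 : (Q ^ ((1 : ℤ) - 2*N) * w) * (Q^2) ^ k = Q ^ (2*(k:ℤ)+1-2*N) * w := by
          rw [← pow_mul, mul_comm (Q ^ ((1 : ℤ) - 2*N)) w, mul_assoc, zpow_mul_pow Q hQ,
            show (1 : ℤ) - 2*N + (2*k : ℕ) = 2*(k:ℤ)+1-2*N from by push_cast; ring,
            mul_comm w]
        have e2 : (Q ^ (2*(k:ℤ)+1-2*N)) * Q ^ (2*(N-1-k)+1) = 1 := by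
          rw [zpow_mul_pow Q hQ,
            show (2*(k:ℤ)+1-2*N) + (2*(N-1-k)+1 : ℕ) = 0 from by push_cast; omega]
          rfl
        have hww : w * w⁻¹ = 1 := mul_inv_cancel₀ hw
        rw [e1]
        calc 1 + Q ^ (2*(k:ℤ)+1-2*N) * w
            = Q ^ (2*(k:ℤ)+1-2*N) * Q ^ (2*(N-1-k)+1) + Q ^ (2*(k:ℤ)+1-2*N) * w := by
              rw [e2]
          _ = (Q ^ (2*(k:ℤ)+1-2*N) * w) * (1 + Q ^ (2*(N-1-k)+1) * w⁻¹) := by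
              rw [mul_add, mul_one,
                show (Q ^ (2*(k:ℤ)+1-2*N) * w) * (Q ^ (2*(N-1-k)+1) * w⁻¹)
                  = (Q ^ (2*(k:ℤ)+1-2*N) * Q ^ (2*(N-1-k)+1)) * (w * w⁻¹) from by ring,
                hww, mul_one]
              ring
      rw [prod_congr rfl term, prod_mul_distrib, prod_mul_distrib, prod_const, card_range,
        prod_zpow Q hQ, prod_range_reflect (fun k => 1 + Q ^ (2*k+1) * w⁻¹) N,
        show ∑ k ∈ range N, (2*(k:ℤ)+1-2*N) = -(N:ℤ)^2 from by
          rw [sum_sub_distrib, sum_odd_int, sum_const, card_range]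
          push_cast; ring]
    · refine prod_congr rfl fun k hk => ?_
      have : (Q ^ ((1 : ℤ) - 2*N) * w) * (Q^2) ^ (N+k) = Q ^ (2*k+1) * w := by
        rw [← pow_mul, mul_comm (Q ^ ((1 : ℤ) - 2*N)) w, mul_assoc, zpow_mul_pow Q hQ,
          show (1 : ℤ) - 2*N + (2*(N+k) : ℕ) = ((2*k+1 : ℕ) : ℤ) from by push_cast; ring,
          zpow_natCast, mul_comm w]
      rw [this]
  rw [hsplit] at hg
  have hone : Q ^ ((N:ℤ)^2) * w ^ (-(N:ℤ)) * (Q ^ (-(N:ℤ)^2) * w ^ N) = 1 := by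
    rw [← zpow_natCast w N,
      show Q ^ ((N:ℤ)^2) * w ^ (-(N:ℤ)) * (Q ^ (-(N:ℤ)^2) * w ^ ((N:ℕ):ℤ))
        = (Q ^ ((N:ℤ)^2) * Q ^ (-(N:ℤ)^2)) * (w ^ (-(N:ℤ)) * w ^ ((N:ℕ):ℤ)) from by ring,
      ← zpow_add₀ hQ, ← zpow_add₀ hw]
    push_cast
    simp
  have hg2 : ∏ k ∈ range N, ((1 + Q ^ (2*k+1) * w) * (1 + Q ^ (2*k+1) * w⁻¹))
      = Q ^ ((N:ℤ)^2) * w ^ (-(N:ℤ)) *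
        ∑ k ∈ range (2*N+1), gb (2*N) k (Q^2) * (Q^2) ^ (k.choose 2)
          * (Q ^ ((1 : ℤ) - 2*N) * w) ^ k := by
    rw [← hg, prod_mul_distrib]
    calc (∏ k ∈ range N, (1 + Q ^ (2*k+1) * w)) * ∏ k ∈ range N, (1 + Q ^ (2*k+1) * w⁻¹)
        = (Q ^ ((N:ℤ)^2) * w ^ (-(N:ℤ)) * (Q ^ (-(N:ℤ)^2) * w ^ N))
          * ((∏ k ∈ range N, (1 + Q ^ (2*k+1) * w)) * ∏ k ∈ range N, (1 + Q ^ (2*k+1) * w⁻¹)) := by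
          rw [hone, one_mul]
      _ = _ := by ring
  rw [hg2, mul_sum]
  refine sum_congr rfl fun i hi => ?_
  have eQ : (N:ℤ)^2 + ((2 * i.choose 2 : ℕ) : ℤ) + ((1 : ℤ) - 2*(N:ℤ)) * (i:ℤ)
      = ((i : ℤ) - N)^2 := by
    push_cast
    linear_combination int_two_mul_choose_two i
  have ew : -(N:ℤ) + (i:ℤ) = (i : ℤ) - N := by ring
  rw [mul_pow, zpow_pow Q, ← pow_mul, ← zpow_natCast w i, ← zpow_natCast Q (2 * i.choose 2),
    show Q ^ ((N:ℤ)^2) * w ^ (-(N:ℤ)) * (gb (2*N) i (Q^2) * Q ^ ((2 * i.choose 2 : ℕ) : ℤ)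
        * (Q ^ (((1 : ℤ) - 2*(N:ℤ)) * (i:ℤ)) * w ^ ((i:ℤ))))
      = gb (2*N) i (Q^2) * (Q ^ ((N:ℤ)^2) * Q ^ ((2 * i.choose 2 : ℕ) : ℤ)
          * Q ^ (((1 : ℤ) - 2*(N:ℤ)) * (i:ℤ))) * (w ^ (-(N:ℤ)) * w ^ ((i:ℤ))) from by ring,
    ← zpow_add₀ hQ, ← zpow_add₀ hQ, ← zpow_add₀ hw, eQ, ew]


/-! ### Analytic helpers -/

lemma summable_log_one_add {a : ℕ → ℂ} (ha : Summable a) :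
    Summable (fun n => Complex.log (1 + a n)) := by
  have h0 : Tendsto (fun n => ‖a n‖) atTop (𝓝 0) := by
    simpa using ha.tendsto_atTop_zero.norm
  have hev : ∀ᶠ n in atTop, ‖a n‖ ≤ 1/2 :=
    (h0.eventually_lt_const (by norm_num : (0:ℝ) < 1/2)).mono fun n hn => hn.le
  refine Summable.of_norm_bounded_eventually_nat (g := fun n => 3/2 * ‖a n‖)
    (ha.norm.mul_left _) ?_
  filter_upwards [hev] with n hn
  exact Complex.norm_log_one_add_half_le_self hn

lemma multipliable_one_add {a : ℕ → ℂ} (ha : Summable a) :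
    Multipliable (fun n => 1 + a n) := by
  by_cases hz : ∀ n, 1 + a n ≠ 0
  · exact Complex.multipliable_of_summable_log
      (summable_log_one_add ha)
  · push_neg at hz
    obtain ⟨n₀, hn₀⟩ := hz
    refine ⟨0, ?_⟩
    have hev : ∀ᶠ s : Finset ℕ in atTop, (0:ℂ) = ∏ i ∈ s, (1 + a i) := by
      filter_upwards [eventually_ge_atTop ({n₀} : Finset ℕ)] with s hs
      exact (Finset.prod_eq_zero (hs (Finset.mem_singleton_self n₀)) hn₀).symm
    exact Tendsto.congr' hev tendsto_const_nhds

lemma tprod_one_add_ne_zero {a : ℕ → ℂ} (ha : Summable a) (h : ∀ n, 1 + a n ≠ 0) :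
    (∏' n, (1 + a n)) ≠ 0 := by
  have hcongr := Complex.cexp_tsum_eq_tprod (f := fun n => 1 + a n)
    (fun n => h n) (summable_log_one_add ha)
  rw [← hcongr]
  exact Complex.exp_ne_zero _

lemma summable_geo_shift (Q v : ℂ) (hQ : ‖Q‖ < 1) (m r : ℕ) (hm : m ≠ 0) :
    Summable (fun n : ℕ => Q ^ (m*n+r) * v) := by
  have h1 : Summable (fun n : ℕ => (Q^m)^n) := by
    apply summable_geometric_of_norm_lt_one
    rw [norm_pow]
    exact pow_lt_one₀ (norm_nonneg Q) hQ hm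
  exact (h1.mul_right (Q^r * v)).congr fun n => by
    rw [← mul_assoc, ← pow_mul, ← pow_add]

/-- The Jacobi triple product. -/
theorem jtp (Q w : ℂ) (hQ1 : ‖Q‖ < 1) (hQ0 : Q ≠ 0) (hw : w ≠ 0) :
    ∑' n : ℤ, Q ^ (n^2) * w ^ n
    = (∏' n : ℕ, (1 - (Q^2) ^ (n+1)))
      * ((∏' n : ℕ, (1 + Q ^ (2*n+1) * w)) * (∏' n : ℕ, (1 + Q ^ (2*n+1) * w⁻¹))) := by
  set q := Q^2 with hq
  have hq1 : ‖q‖ < 1 := by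
    rw [hq, norm_pow]; exact pow_lt_one₀ (norm_nonneg Q) hQ1 two_ne_zero
  have hq0 : q ≠ 0 := pow_ne_zero 2 hQ0
  have hsq : Summable (fun n : ℕ => q ^ (1*n+1) * (-1 : ℂ)) :=
    summable_geo_shift q (-1) hq1 1 1 one_ne_zero
  have ME : Multipliable (fun n : ℕ => 1 - q ^ (n+1)) :=
    (multipliable_one_add hsq).congr (fun n => by push_cast; ring_nf)
  have hDlim : Tendsto (fun m => ∏ j ∈ range m, (1 - q ^ (j+1))) atTop
      (𝓝 (∏' n : ℕ, (1 - q ^ (n+1)))) := ME.hasProd.tendsto_prod_nat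
  set E := ∏' n : ℕ, (1 - q ^ (n+1)) with hE
  have hfne : ∀ j : ℕ, 1 - q ^ (j+1) ≠ 0 := by
    intro j
    have h1 : ‖q ^ (j+1)‖ < 1 := by
      rw [norm_pow]; exact pow_lt_one₀ (norm_nonneg q) hq1 (Nat.succ_ne_zero j)
    intro h
    rw [sub_eq_zero] at h
    rw [← h] at h1
    simp at h1
  have hE0 : E ≠ 0 := by
    rw [hE, show (∏' n : ℕ, (1 - q ^ (n+1))) = ∏' n : ℕ, (1 + q ^ (1*n+1) * (-1 : ℂ)) from
      tprod_congr fun n => by push_cast; ring_nf]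
    exact tprod_one_add_ne_zero hsq (fun n => by
      have := hfne n
      intro hcon
      apply this
      rw [← hcon]; push_cast; ring)
  -- real bounds
  set x := ‖q‖ with hx
  have hx0 : 0 ≤ x := norm_nonneg q
  have hrfne : ∀ j : ℕ, 0 < 1 - x ^ (j+1) := by
    intro j
    have h := pow_lt_one₀ (n := j+1) hx0 hq1 (by omega)
    linarith
  have hrlog : Summable (fun n : ℕ => Real.log (1 - x ^ (n+1))) := by
    have hgeo : Summable (fun n : ℕ => 2 * x * x ^ n) :=
      (summable_geometric_of_lt_one hx0 hq1).mul_left (2 * x)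
    refine Summable.of_norm_bounded_eventually_nat hgeo ?_
    have htd : Tendsto (fun n : ℕ => x ^ (n+1)) atTop (𝓝 0) := by
      have := (tendsto_pow_atTop_nhds_zero_of_lt_one hx0 hq1).const_mul x
      rw [mul_zero] at this
      exact this.congr fun n => by ring
    have hev : ∀ᶠ n : ℕ in atTop, x ^ (n+1) ≤ 1/2 :=
      (htd.eventually_lt_const (by norm_num : (0:ℝ) < 1/2)).mono fun n hn => hn.le
    filter_upwards [hev] with n hn
    set t := x ^ (n+1) with ht
    have ht0 : 0 ≤ t := pow_nonneg hx0 _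
    have h1t : 0 < 1 - t := by linarith
    rw [Real.norm_eq_abs, abs_of_nonpos (Real.log_nonpos (by linarith) (by linarith))]
    have hlog : -Real.log (1 - t) = Real.log ((1-t)⁻¹) := (Real.log_inv _).symm
    rw [hlog]
    have h2 : Real.log ((1-t)⁻¹) ≤ (1-t)⁻¹ - 1 :=
      Real.log_le_sub_one_of_pos (inv_pos.mpr h1t)
    have h3 : (1-t)⁻¹ - 1 ≤ 2 * t := by
      rw [inv_eq_one_div, div_sub' h1t.ne', div_le_iff₀ h1t]
      nlinarith
    have h4 : 2 * t = 2 * x * x ^ n := by rw [ht]; ring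
    linarith
  have hmr : Multipliable (fun n : ℕ => 1 - x ^ (n+1)) :=
    Real.multipliable_of_summable_log
      hrfne hrlog
  set cr := ∏' n : ℕ, (1 - x ^ (n+1)) with hcr
  have hcr_pos : 0 < cr := by
    have hcongr := Real.rexp_tsum_eq_tprod
      hrfne hrlog
    rw [hcr, ← hcongr]
    exact Real.exp_pos _
  have hanti : Antitone (fun m => ∏ j ∈ range m, (1 - x ^ (j+1))) := by
    apply antitone_nat_of_succ_le
    intro m
    rw [prod_range_succ]
    have hp : 0 < ∏ j ∈ range m, (1 - x ^ (j+1)) := prod_pos fun j _ => hrfne j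
    nlinarith [hrfne m, pow_nonneg hx0 (m+1), hp]
  have hcr_le : ∀ m, cr ≤ ∏ j ∈ range m, (1 - x ^ (j+1)) :=
    fun m => hanti.le_of_tendsto hmr.hasProd.tendsto_prod_nat m
  have hDlb : ∀ m, cr ≤ ‖∏ j ∈ range m, (1 - q ^ (j+1))‖ := by
    intro m
    refine (hcr_le m).trans ?_
    rw [norm_prod]
    refine Finset.prod_le_prod (fun j _ => (hrfne j).le) (fun j _ => ?_)
    have h1 : 1 - x ^ (j+1) = ‖(1:ℂ)‖ - ‖q ^ (j+1)‖ := by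
      rw [norm_one, norm_pow]
    rw [h1]
    exact (norm_sub_norm_le _ _).trans (le_of_eq rfl)
  set U := Real.exp (x * (1-x)⁻¹) with hU
  have hDub : ∀ m, ‖∏ j ∈ range m, (1 - q ^ (j+1))‖ ≤ U := by
    intro m
    rw [norm_prod]
    calc ∏ j ∈ range m, ‖1 - q ^ (j+1)‖ ≤ ∏ j ∈ range m, Real.exp (x ^ (j+1)) := by
          refine Finset.prod_le_prod (fun j _ => norm_nonneg _) (fun j _ => ?_)
          calc ‖1 - q ^ (j+1)‖ ≤ ‖(1:ℂ)‖ + ‖q ^ (j+1)‖ := norm_sub_le _ _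
            _ = x ^ (j+1) + 1 := by rw [norm_one, norm_pow]; ring
            _ ≤ Real.exp (x ^ (j+1)) := Real.add_one_le_exp _
      _ = Real.exp (∑ j ∈ range m, x ^ (j+1)) := by rw [Real.exp_sum]
      _ ≤ U := by
          rw [hU]
          apply Real.exp_le_exp.mpr
          calc ∑ j ∈ range m, x ^ (j+1) = x * ∑ j ∈ range m, x ^ j := by
                rw [mul_sum]
                exact sum_congr rfl fun j _ => by ring
            _ ≤ x * (1-x)⁻¹ := by
                apply mul_le_mul_of_nonneg_left _ hx0
                have hs := (summable_geometric_of_lt_one hx0 hq1).sum_le_tsum (range m)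
                  (fun j _ => pow_nonneg hx0 j)
                rwa [tsum_geometric_of_lt_one hx0 hq1] at hs
  have hD0 : ∀ m, (∏ j ∈ range m, (1 - q ^ (j+1))) ≠ 0 :=
    fun m => Finset.prod_ne_zero_iff.mpr (fun j _ => hfne j)
  have hgb_eq : ∀ N k, k ≤ 2*N → gb (2*N) k q = (∏ j ∈ range (2*N), (1 - q ^ (j+1)))
      / ((∏ j ∈ range (2*N-k), (1 - q ^ (j+1))) * (∏ j ∈ range k, (1 - q ^ (j+1)))) := by
    intro N k hk
    have h1 := gb_mul q (2*N) k hk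
    have h2 : ∏ j ∈ range (2*N), (1 - q ^ (j+1))
        = (∏ j ∈ range (2*N-k), (1 - q ^ (j+1))) * ∏ j ∈ range k, (1 - q ^ (2*N-k+j+1)) := by
      calc ∏ j ∈ range (2*N), (1 - q ^ (j+1))
          = ∏ j ∈ range (2*N-k+k), (1 - q ^ (j+1)) := by rw [Nat.sub_add_cancel hk]
        _ = _ := prod_range_add _ _ _
    rw [h2, ← h1, eq_div_iff (mul_ne_zero (hD0 _) (hD0 _))]
    ring
  have hgb_bound : ∀ N k, k ≤ 2*N → ‖gb (2*N) k q‖ ≤ U / (cr * cr) := by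
    intro N k hk
    rw [hgb_eq N k hk, norm_div, norm_mul]
    refine div_le_div₀ (by rw [hU]; positivity) (hDub _) (by positivity) ?_
    exact mul_le_mul (hDlb _) (hDlb _) hcr_pos.le (norm_nonneg _)
  -- the ℤ-indexed partial sums
  set g : ℕ → ℤ → ℂ := fun N i =>
    if i.natAbs ≤ N then gb (2*N) (i + N).toNat q * Q ^ (i^2) * w ^ i else 0 with hgdef
  have hstep1 : ∀ N, (∏ k ∈ range N, ((1 + Q ^ (2*k+1) * w) * (1 + Q ^ (2*k+1) * w⁻¹)))
      = ∑' i : ℤ, g N i := by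
    intro N
    rw [Fsym Q w hQ0 hw N, ← hq]
    rw [tsum_eq_sum (s := (range (2*N+1)).image (fun i : ℕ => (i : ℤ) - N))
      (f := fun i => g N i) ?_]
    · rw [Finset.sum_image ?inj]
      case inj =>
        intro i _ j _ hij
        have hij' : (i:ℤ) - N = (j:ℤ) - N := hij
        omega
      refine sum_congr rfl fun i hi => ?_
      have hi' : i < 2*N+1 := mem_range.mp hi
      simp only [hgdef]
      rw [if_pos (by omega), show ((i:ℤ) - N + N).toNat = i from by omega]
    · intro i hi
      have hni : ¬ (i.natAbs ≤ N) := by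
        intro habs
        exact hi (Finset.mem_image.mpr ⟨(i + N).toNat, mem_range.mpr (by omega), by omega⟩)
      simp only [hgdef, if_neg hni]
  have hptlim : ∀ i : ℤ, Tendsto (fun N => g N i) atTop (𝓝 (E⁻¹ * (Q ^ (i^2) * w ^ i))) := by
    intro i
    have hev : (fun N => gb (2*N) (i+N).toNat q * Q ^ (i^2) * w ^ i) =ᶠ[atTop] (fun N => g N i) := by
      filter_upwards [eventually_ge_atTop i.natAbs] with N hN
      simp only [hgdef]
      rw [if_pos hN]
    refine Tendsto.congr' hev ?_
    have hgbl : Tendsto (fun N => gb (2*N) (i+N).toNat q) atTop (𝓝 (E / (E * E))) := by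
      have hev2 : (fun N : ℕ => (∏ j ∈ range (2*N), (1 - q ^ (j+1)))
          / ((∏ j ∈ range (2*N - (i+N).toNat), (1 - q ^ (j+1)))
            * (∏ j ∈ range ((i+N).toNat), (1 - q ^ (j+1)))))
          =ᶠ[atTop] (fun N => gb (2*N) (i+N).toNat q) := by
        filter_upwards [eventually_ge_atTop i.natAbs] with N hN
        rw [hgb_eq N _ (by omega)]
      refine Tendsto.congr' hev2 (Tendsto.div ?_ (Tendsto.mul ?_ ?_) (mul_ne_zero hE0 hE0))
      · exact hDlim.comp (tendsto_atTop_atTop.mpr fun b => ⟨b, fun n hn => by omega⟩)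
      · exact hDlim.comp (tendsto_atTop_atTop.mpr fun b => ⟨b + i.natAbs, fun n hn => by omega⟩)
      · exact hDlim.comp (tendsto_atTop_atTop.mpr fun b => ⟨b + i.natAbs, fun n hn => by omega⟩)
    have hEE : E / (E * E) = E⁻¹ := by field_simp
    rw [hEE] at hgbl
    have := hgbl.mul_const (Q ^ (i^2) * w ^ i)
    exact this.congr fun N => by ring
  -- bound
  set r := max ‖w‖ ‖w⁻¹‖ with hr
  have hr0 : 0 ≤ r := le_trans (norm_nonneg w) (le_max_left _ _)
  have hwb : ∀ i : ℤ, ‖w ^ i‖ ≤ r ^ i.natAbs := by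
    intro i
    match i with
    | Int.ofNat n =>
      rw [Int.ofNat_eq_coe, zpow_natCast, norm_pow, Int.natAbs_natCast]
      exact pow_le_pow_left₀ (norm_nonneg w) (le_max_left _ _) n
    | Int.negSucc n =>
      rw [zpow_negSucc, norm_inv, norm_pow, ← inv_pow, Int.natAbs_negSucc]
      rw [show ‖w‖⁻¹ = ‖w⁻¹‖ from (norm_inv w).symm]
      exact pow_le_pow_left₀ (norm_nonneg w⁻¹) (le_max_right _ _) (n+1)
  have hQb : ∀ i : ℤ, ‖Q ^ (i^2)‖ = ‖Q‖ ^ (i.natAbs^2) := by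
    intro i
    rw [show (i^2 : ℤ) = ((i.natAbs^2 : ℕ) : ℤ) from by push_cast; rw [_root_.sq_abs],
      zpow_natCast, norm_pow]
  set Cb := U / (cr * cr) with hCb
  have hCb0 : 0 ≤ Cb := by rw [hCb, hU]; positivity
  have hbsum : Summable (fun i : ℤ => Cb * (‖Q‖ ^ (i.natAbs^2) * r ^ i.natAbs)) := by
    apply Summable.mul_left
    have hnat : Summable (fun n : ℕ => ‖Q‖ ^ (n^2) * r ^ n) := by
      have htend : Tendsto (fun n : ℕ => ‖Q‖ ^ n * r) atTop (𝓝 (0 * r)) :=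
        (tendsto_pow_atTop_nhds_zero_of_lt_one (norm_nonneg Q) hQ1).mul_const r
      rw [zero_mul] at htend
      have hev0 : ∀ᶠ n : ℕ in atTop, ‖Q‖ ^ n * r ≤ 1 :=
        (htend.eventually_lt_const one_pos).mono fun n hn => hn.le
      have hsh : Tendsto (fun n : ℕ => n - 1) atTop atTop :=
        tendsto_atTop_atTop.mpr fun b => ⟨b+1, fun n hn => by omega⟩
      refine Summable.of_norm_bounded_eventually_nat (g := fun n => ‖Q‖ ^ n)
        (summable_geometric_of_lt_one (norm_nonneg Q) hQ1) ?_
      filter_upwards [hsh.eventually hev0, eventually_ge_atTop 1] with n hn h1n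
      obtain ⟨m, rfl⟩ : ∃ m, n = m + 1 := ⟨n-1, by omega⟩
      rw [Nat.add_sub_cancel] at hn
      rw [Real.norm_eq_abs, _root_.abs_of_nonneg (by positivity)]
      calc ‖Q‖ ^ ((m+1)^2) * r ^ (m+1)
          = ‖Q‖ ^ (m+1) * ((‖Q‖ ^ m * r) ^ (m+1)) := by
            rw [show (m+1)^2 = (m+1) + m*(m+1) from by ring, pow_add, pow_mul, mul_pow]
            ring
        _ ≤ ‖Q‖ ^ (m+1) * 1 := by
            refine mul_le_mul_of_nonneg_left ?_ (by positivity)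
            exact pow_le_one₀ (by positivity) hn
        _ = ‖Q‖ ^ (m+1) := mul_one _
    refine Summable.of_nat_of_neg (hnat.congr fun n => ?_) (hnat.congr fun n => ?_) <;>
      simp
  have hbound : ∀ N, ∀ i : ℤ, ‖g N i‖ ≤ Cb * (‖Q‖ ^ (i.natAbs^2) * r ^ i.natAbs) := by
    intro N i
    simp only [hgdef]
    split_ifs with h
    · rw [norm_mul, norm_mul, hQb]
      refine le_trans (mul_le_mul (mul_le_mul_of_nonneg_right (hgb_bound N _ (by omega))
        (by positivity)) (hwb i) (norm_nonneg _) (by positivity)) (le_of_eq ?_)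
      rw [hCb]; ring
    · rw [norm_zero]; positivity
  have hlim1 : Tendsto (fun N => ∑' i : ℤ, g N i) atTop
      (𝓝 (∑' i : ℤ, E⁻¹ * (Q ^ (i^2) * w ^ i))) :=
    tendsto_tsum_of_dominated_convergence hbsum hptlim (Eventually.of_forall hbound)
  have hM1 : Multipliable (fun n : ℕ => 1 + Q ^ (2*n+1) * w) :=
    multipliable_one_add (summable_geo_shift Q w hQ1 2 1 two_ne_zero)
  have hM2 : Multipliable (fun n : ℕ => 1 + Q ^ (2*n+1) * w⁻¹) :=
    multipliable_one_add (summable_geo_shift Q w⁻¹ hQ1 2 1 two_ne_zero)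
  have hlim2 : Tendsto (fun N => ∑' i : ℤ, g N i) atTop
      (𝓝 ((∏' n : ℕ, (1 + Q ^ (2*n+1) * w)) * (∏' n : ℕ, (1 + Q ^ (2*n+1) * w⁻¹)))) := by
    refine Tendsto.congr (fun N => ?_) (Tendsto.mul hM1.hasProd.tendsto_prod_nat
      hM2.hasProd.tendsto_prod_nat)
    rw [← prod_mul_distrib, hstep1 N]
  have huniq := tendsto_nhds_unique hlim1 hlim2
  rw [tsum_mul_left] at huniq
  rw [← huniq]
  rw [← mul_assoc, mul_inv_cancel₀ hE0, one_mul]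


/-- `jTheta` in terms of the standard two-variable sum. -/
lemma jTheta_eq (a b : ℝ) (τ z : ℂ) :
    jTheta a b τ z = Complex.exp ((Real.pi : ℂ) * I * (a:ℂ)^2 / 4 * τ
        + (Real.pi : ℂ) * I * (a:ℂ) * (z + (b:ℂ)/2))
      * ∑' n : ℤ, (Complex.exp ((Real.pi : ℂ) * I * τ)) ^ (n^2)
          * (Complex.exp (2 * (Real.pi : ℂ) * I * (z + (b:ℂ)/2 + (a:ℂ)*τ/2))) ^ n := by
  rw [jTheta, ← tsum_mul_left]
  refine tsum_congr fun n => ?_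
  rw [show ((n:ℤ)^2) = (((n^2 : ℤ)) : ℤ) from rfl]
  rw [← Complex.exp_int_mul _ (n^2), ← Complex.exp_int_mul _ n, ← Complex.exp_add,
    ← Complex.exp_add]
  congr 1
  push_cast
  ring

/-- `dedekindEta` with the nome written as a square. -/
lemma eta_eq (τ : ℂ) :
    dedekindEta τ = Complex.exp ((Real.pi : ℂ) * I * τ / 12)
      * ∏' n : ℕ, (1 - ((Complex.exp ((Real.pi : ℂ) * I * τ))^2) ^ (n+1)) := by
  rw [dedekindEta]
  congr 1
  refine tprod_congr fun n => ?_
  congr 2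
  rw [sq, ← Complex.exp_add]
  ring_nf

/-- The core product identity behind the quadruple product formula. -/
lemma core (Q w : ℂ) (hQ1 : ‖Q‖ < 1) (hQ0 : Q ≠ 0) (hw : w ≠ 0) :
    (∏' n : ℕ, (1 + Q^(2*n+1) * (-(w^2*Q)))) * (∏' n : ℕ, (1 + Q^(2*n+1) * (-(w^2*Q))⁻¹))
    = (∏' n : ℕ, (1 + Q^(2*n+1) * w)) * (∏' n : ℕ, (1 + Q^(2*n+1) * w⁻¹))
    * ((∏' n : ℕ, (1 + Q^(2*n+1) * (-w))) * (∏' n : ℕ, (1 + Q^(2*n+1) * (-w)⁻¹)))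
    * ((∏' n : ℕ, (1 + Q^(2*n+1) * (w*Q))) * (∏' n : ℕ, (1 + Q^(2*n+1) * (w*Q)⁻¹)))
    * ((∏' n : ℕ, (1 + Q^(2*n+1) * (-(w*Q)))) * (∏' n : ℕ, (1 + Q^(2*n+1) * (-(w*Q))⁻¹))) := by
  have hw2 : w^2 ≠ 0 := pow_ne_zero 2 hw
  have MA : ∀ v : ℂ, Multipliable (fun n : ℕ => 1 + Q^(2*n+1) * v) := fun v =>
    multipliable_one_add (summable_geo_shift Q v hQ1 2 1 two_ne_zero)
  have MB : ∀ (r : ℕ) (v : ℂ), Multipliable (fun n : ℕ => 1 - Q^(2*n+r) * v) := fun r v =>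
    (multipliable_one_add (summable_geo_shift Q (-v) hQ1 2 r two_ne_zero)).congr
      (fun n => by ring)
  -- pair lemma
  have pair : ∀ v : ℂ, (∏' n : ℕ, (1 + Q^(2*n+1) * v)) * (∏' n : ℕ, (1 + Q^(2*n+1) * (-v)))
      = ∏' n : ℕ, (1 - Q^(2*(2*n+1)) * v^2) := by
    intro v
    rw [← Multipliable.tprod_mul (MA v) (MA (-v))]
    exact tprod_congr fun n => by rw [pow_mul ]; ring
  -- left side : rewrite the two products
  have L1 : (∏' n : ℕ, (1 + Q^(2*n+1) * (-(w^2*Q)))) = ∏' n : ℕ, (1 - Q^(2*n+2) * w^2) := by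
    refine tprod_congr fun n => ?_
    rw [show 2*n+2 = (2*n+1)+1 from by ring, pow_succ]
    ring
  have L2 : (∏' n : ℕ, (1 + Q^(2*n+1) * (-(w^2*Q))⁻¹)) = ∏' n : ℕ, (1 - Q^(2*n) * (w^2)⁻¹) := by
    refine tprod_congr fun n => ?_
    rw [show 2*n+1 = (2*n)+1 from rfl, pow_succ]
    field_simp
    ring
  -- even/odd merges
  have E1 : (∏' n : ℕ, (1 - Q^(2*(2*n)+2) * w^2)) * (∏' n : ℕ, (1 - Q^(2*(2*n+1)+2) * w^2))
      = ∏' n : ℕ, (1 - Q^(2*n+2) * w^2) := by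
    refine tprod_even_mul_odd (f := fun n => 1 - Q^(2*n+2) * w^2) ?_ ?_
    · exact (multipliable_one_add (summable_geo_shift Q (-(w^2)) hQ1 4 2 (by norm_num))).congr
        (fun n => by show 1 + Q^(4*n+2) * -(w^2) = 1 - Q^(2*(2*n)+2)*w^2
                     rw [show 2*(2*n)+2 = 4*n+2 from by ring]; ring)
    · exact (multipliable_one_add (summable_geo_shift Q (-(w^2)) hQ1 4 4 (by norm_num))).congr
        (fun n => by show 1 + Q^(4*n+4) * -(w^2) = 1 - Q^(2*(2*n+1)+2)*w^2
                     rw [show 2*(2*n+1)+2 = 4*n+4 from by ring]; ring)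
  have E2 : (∏' n : ℕ, (1 - Q^(2*(2*n)) * (w^2)⁻¹)) * (∏' n : ℕ, (1 - Q^(2*(2*n+1)) * (w^2)⁻¹))
      = ∏' n : ℕ, (1 - Q^(2*n) * (w^2)⁻¹) := by
    refine tprod_even_mul_odd (f := fun n => 1 - Q^(2*n) * (w^2)⁻¹) ?_ ?_
    · exact (multipliable_one_add (summable_geo_shift Q (-(w^2)⁻¹) hQ1 4 0 (by norm_num))).congr
        (fun n => by show 1 + Q^(4*n+0) * -(w^2)⁻¹ = 1 - Q^(2*(2*n))*(w^2)⁻¹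
                     rw [show 2*(2*n) = 4*n+0 from by ring]; ring)
    · exact (multipliable_one_add (summable_geo_shift Q (-(w^2)⁻¹) hQ1 4 2 (by norm_num))).congr
        (fun n => by show 1 + Q^(4*n+2) * -(w^2)⁻¹ = 1 - Q^(2*(2*n+1))*(w^2)⁻¹
                     rw [show 2*(2*n+1) = 4*n+2 from by ring]; ring)
  -- identify the four pairs
  have P1 : (∏' n : ℕ, (1 + Q^(2*n+1) * w)) * (∏' n : ℕ, (1 + Q^(2*n+1) * (-w)))
      = ∏' n : ℕ, (1 - Q^(2*(2*n)+2) * w^2) := by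
    rw [pair w]
    exact tprod_congr fun n => by rw [show 2*(2*n)+2 = 2*(2*n+1) from by ring]
  have P2 : (∏' n : ℕ, (1 + Q^(2*n+1) * (w*Q))) * (∏' n : ℕ, (1 + Q^(2*n+1) * (-(w*Q))))
      = ∏' n : ℕ, (1 - Q^(2*(2*n+1)+2) * w^2) := by
    rw [pair (w*Q)]
    refine tprod_congr fun n => ?_
    rw [mul_pow, show 2*(2*n+1)+2 = 2*(2*n+1)+2 from rfl]
    rw [show (2:ℕ)*(2*n+1)+2 = 2*(2*n+1) + 2 from rfl, pow_add]
    ring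
  have P3 : (∏' n : ℕ, (1 + Q^(2*n+1) * w⁻¹)) * (∏' n : ℕ, (1 + Q^(2*n+1) * (-w)⁻¹))
      = ∏' n : ℕ, (1 - Q^(2*(2*n+1)) * (w^2)⁻¹) := by
    have : (∏' n : ℕ, (1 + Q^(2*n+1) * (-w)⁻¹)) = ∏' n : ℕ, (1 + Q^(2*n+1) * (-w⁻¹)) := by
      refine tprod_congr fun n => ?_
      rw [inv_neg]
    rw [this, pair w⁻¹]
    exact tprod_congr fun n => by rw [inv_pow]
  have P4 : (∏' n : ℕ, (1 + Q^(2*n+1) * (w*Q)⁻¹)) * (∏' n : ℕ, (1 + Q^(2*n+1) * (-(w*Q))⁻¹))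
      = ∏' n : ℕ, (1 - Q^(2*(2*n)) * (w^2)⁻¹) := by
    have h1 : (∏' n : ℕ, (1 + Q^(2*n+1) * (-(w*Q))⁻¹))
        = ∏' n : ℕ, (1 + Q^(2*n+1) * (-(w*Q)⁻¹)) := by
      refine tprod_congr fun n => ?_
      rw [inv_neg]
    rw [h1, pair (w*Q)⁻¹]
    refine tprod_congr fun n => ?_
    have hQn : (Q:ℂ) ≠ 0 := hQ0
    rw [mul_inv, mul_pow, inv_pow, inv_pow]
    rw [show (2:ℕ)*(2*n+1) = 2*(2*n) + 2 from by ring, pow_add]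
    field_simp
  rw [L1, L2, ← E1, ← E2, ← P1, ← P2, ← P3, ← P4]
  ring


/-- The quadruple product identity `η(τ)³ ϑ₁₁(τ,2z) = ϑ₀₀ ϑ₀₁ ϑ₁₀ ϑ₁₁ (τ,z)`. -/
theorem K (τ z : ℂ) (hτ : 0 < τ.im) :
    dedekindEta τ ^ 3 * jTheta 1 1 τ (2*z)
    = jTheta 0 0 τ z * jTheta 0 1 τ z * jTheta 1 0 τ z * jTheta 1 1 τ z := by
  have hQ1 : ‖Complex.exp ((Real.pi : ℂ) * I * τ)‖ < 1 := by
    rw [Complex.norm_exp]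
    have hre : ((Real.pi : ℂ) * I * τ).re = -(Real.pi * τ.im) := by
      simp [Complex.mul_re, Complex.mul_im]
    rw [hre, Real.exp_lt_one_iff]
    have := Real.pi_pos
    nlinarith
  set Q := Complex.exp ((Real.pi : ℂ) * I * τ) with hQdef
  set y := Complex.exp ((Real.pi : ℂ) * I * z) with hydef
  have hQ0 : Q ≠ 0 := Complex.exp_ne_zero _
  have hy0 : y ≠ 0 := Complex.exp_ne_zero _
  have hy2 : y^2 ≠ 0 := pow_ne_zero 2 hy0
  have e00 : Complex.exp (2 * (Real.pi : ℂ) * I * (z + ((0:ℝ):ℂ)/2 + ((0:ℝ):ℂ)*τ/2))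
      = y^2 := by
    rw [hydef, sq, ← Complex.exp_add]
    congr 1
    push_cast
    ring
  have e01 : Complex.exp (2 * (Real.pi : ℂ) * I * (z + ((1:ℝ):ℂ)/2 + ((0:ℝ):ℂ)*τ/2))
      = -(y^2) := by
    rw [show 2 * (Real.pi : ℂ) * I * (z + ((1:ℝ):ℂ)/2 + ((0:ℝ):ℂ)*τ/2)
        = ((Real.pi : ℂ) * I * z + (Real.pi : ℂ) * I * z) + (Real.pi : ℂ) * I from by
          push_cast; ring,
      Complex.exp_add, Complex.exp_add, Complex.exp_pi_mul_I, ← hydef]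
    ring
  have e10 : Complex.exp (2 * (Real.pi : ℂ) * I * (z + ((0:ℝ):ℂ)/2 + ((1:ℝ):ℂ)*τ/2))
      = y^2*Q := by
    rw [show 2 * (Real.pi : ℂ) * I * (z + ((0:ℝ):ℂ)/2 + ((1:ℝ):ℂ)*τ/2)
        = ((Real.pi : ℂ) * I * z + (Real.pi : ℂ) * I * z) + (Real.pi : ℂ) * I * τ from by
          push_cast; ring,
      Complex.exp_add, Complex.exp_add, ← hydef, ← hQdef]
    ring
  have e11 : Complex.exp (2 * (Real.pi : ℂ) * I * (z + ((1:ℝ):ℂ)/2 + ((1:ℝ):ℂ)*τ/2))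
      = -(y^2*Q) := by
    rw [show 2 * (Real.pi : ℂ) * I * (z + ((1:ℝ):ℂ)/2 + ((1:ℝ):ℂ)*τ/2)
        = (((Real.pi : ℂ) * I * z + (Real.pi : ℂ) * I * z) + (Real.pi : ℂ) * I * τ)
          + (Real.pi : ℂ) * I from by push_cast; ring,
      Complex.exp_add, Complex.exp_add, Complex.exp_add, Complex.exp_pi_mul_I, ← hydef, ← hQdef]
    ring
  have e2z : Complex.exp (2 * (Real.pi : ℂ) * I * (2*z + ((1:ℝ):ℂ)/2 + ((1:ℝ):ℂ)*τ/2))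
      = -((y^2)^2*Q) := by
    rw [show 2 * (Real.pi : ℂ) * I * (2*z + ((1:ℝ):ℂ)/2 + ((1:ℝ):ℂ)*τ/2)
        = ((((Real.pi : ℂ) * I * z + (Real.pi : ℂ) * I * z) + ((Real.pi : ℂ) * I * z
            + (Real.pi : ℂ) * I * z)) + (Real.pi : ℂ) * I * τ) + (Real.pi : ℂ) * I from by
          push_cast; ring,
      Complex.exp_add, Complex.exp_add, Complex.exp_add, Complex.exp_add,
      Complex.exp_pi_mul_I, ← hydef, ← hQdef]
    ring
  rw [eta_eq, jTheta_eq 1 1 τ (2*z), jTheta_eq 0 0 τ z, jTheta_eq 0 1 τ z,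
    jTheta_eq 1 0 τ z, jTheta_eq 1 1 τ z]
  simp only [← hQdef]
  simp only [e00, e01, e10, e11, e2z]
  rw [jtp Q (y^2) hQ1 hQ0 hy2,
    jtp Q (-(y^2)) hQ1 hQ0 (neg_ne_zero.mpr hy2),
    jtp Q (y^2*Q) hQ1 hQ0 (mul_ne_zero hy2 hQ0),
    jtp Q (-(y^2*Q)) hQ1 hQ0 (neg_ne_zero.mpr (mul_ne_zero hy2 hQ0)),
    jtp Q (-((y^2)^2*Q)) hQ1 hQ0 (neg_ne_zero.mpr (mul_ne_zero (pow_ne_zero 2 hy2) hQ0))]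
  have hcore := core Q (y^2) hQ1 hQ0 hy2
  have hexp : Complex.exp ((Real.pi:ℂ)*I*τ/12)^3
      * Complex.exp ((Real.pi:ℂ)*I*((1:ℝ):ℂ)^2/4*τ
          + (Real.pi:ℂ)*I*((1:ℝ):ℂ)*(2*z+((1:ℝ):ℂ)/2))
      = Complex.exp ((Real.pi:ℂ)*I*((0:ℝ):ℂ)^2/4*τ
          + (Real.pi:ℂ)*I*((0:ℝ):ℂ)*(z+((0:ℝ):ℂ)/2))
      * Complex.exp ((Real.pi:ℂ)*I*((0:ℝ):ℂ)^2/4*τ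
          + (Real.pi:ℂ)*I*((0:ℝ):ℂ)*(z+((1:ℝ):ℂ)/2))
      * Complex.exp ((Real.pi:ℂ)*I*((1:ℝ):ℂ)^2/4*τ
          + (Real.pi:ℂ)*I*((1:ℝ):ℂ)*(z+((0:ℝ):ℂ)/2))
      * Complex.exp ((Real.pi:ℂ)*I*((1:ℝ):ℂ)^2/4*τ
          + (Real.pi:ℂ)*I*((1:ℝ):ℂ)*(z+((1:ℝ):ℂ)/2)) := by
    rw [show (Complex.exp ((Real.pi:ℂ)*I*τ/12))^3
        = Complex.exp ((Real.pi:ℂ)*I*τ/12 + ((Real.pi:ℂ)*I*τ/12 + (Real.pi:ℂ)*I*τ/12)) from by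
          rw [Complex.exp_add, Complex.exp_add]; ring,
      ← Complex.exp_add, ← Complex.exp_add, ← Complex.exp_add, ← Complex.exp_add]
    congr 1
    push_cast
    ring
  linear_combination
    ((∏' n : ℕ, (1 - (Q^2) ^ (n+1)))^4
      * ((∏' n : ℕ, (1 + Q^(2*n+1) * (-((y^2)^2*Q))))
        * (∏' n : ℕ, (1 + Q^(2*n+1) * (-((y^2)^2*Q))⁻¹)))) * hexp
    + ((∏' n : ℕ, (1 - (Q^2) ^ (n+1)))^4
      * (Complex.exp ((Real.pi:ℂ)*I*((0:ℝ):ℂ)^2/4*τ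
          + (Real.pi:ℂ)*I*((0:ℝ):ℂ)*(z+((0:ℝ):ℂ)/2))
        * Complex.exp ((Real.pi:ℂ)*I*((0:ℝ):ℂ)^2/4*τ
          + (Real.pi:ℂ)*I*((0:ℝ):ℂ)*(z+((1:ℝ):ℂ)/2))
        * Complex.exp ((Real.pi:ℂ)*I*((1:ℝ):ℂ)^2/4*τ
          + (Real.pi:ℂ)*I*((1:ℝ):ℂ)*(z+((0:ℝ):ℂ)/2))
        * Complex.exp ((Real.pi:ℂ)*I*((1:ℝ):ℂ)^2/4*τ
          + (Real.pi:ℂ)*I*((1:ℝ):ℂ)*(z+((1:ℝ):ℂ)/2)))) * hcore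


end JTPAux

/-- Lemma 9.2, 2)(ii) of the paper: the Ramond super-character quotient. -/
theorem Psi_div_RRminus (M : ℕ) (hM : 0 < M) (j : ℝ) (hj : ∃ n : ℤ, j = n)
    (τ : ℂ) (hτ : 0 < τ.im) (z : ℂ)
    (h1 : jTheta 1 1 ((M : ℂ) * τ) (z + (j : ℂ) * τ) ≠ 0)
    (h2 : jTheta 0 0 τ z ≠ 0) (h3 : jTheta 0 1 τ z ≠ 0)
    (h4 : jTheta 1 0 τ z ≠ 0) (h5 : jTheta 1 1 τ z ≠ 0)
    (h6 : jTheta 1 1 τ (2 * z) ≠ 0) :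
    Psi M 0 j j τ z z 0 / RRminus τ z =
      -(Complex.exp (2 * (Real.pi : ℂ) * I * τ * ((j : ℂ) ^ 2 / (M : ℂ))) *
        Complex.exp (4 * (Real.pi : ℂ) * I / (M : ℂ) * (j : ℂ) * z) *
        (jTheta 0 0 ((M : ℂ) * τ) (z + (j : ℂ) * τ) *
         jTheta 0 1 ((M : ℂ) * τ) (z + (j : ℂ) * τ) *
         jTheta 1 0 ((M : ℂ) * τ) (z + (j : ℂ) * τ) /
         jTheta 1 1 ((M : ℂ) * τ) (z + (j : ℂ) * τ)) *
        (jTheta 1 1 τ z / (jTheta 0 0 τ z * jTheta 0 1 τ z * jTheta 1 0 τ z))) := by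
  have hMτ : 0 < ((M : ℂ) * τ).im := by
    have him : ((M : ℂ) * τ).im = (M : ℝ) * τ.im := by
      simp [Complex.mul_im]
    rw [him]
    exact mul_pos (by exact_mod_cast hM) hτ
  have K1 := JTPAux.K ((M : ℂ) * τ) (z + (j : ℂ) * τ) hMτ
  have K2 := JTPAux.K τ z hτ
  rw [Psi, RRminus]
  simp only [Complex.ofReal_zero, add_zero, sub_zero, mul_zero, neg_zero, zero_div,
    Complex.exp_zero, mul_one]
  rw [show z + z + ((j : ℂ) + (j : ℂ)) * τ = 2 * (z + (j : ℂ) * τ) from by ring]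
  rw [show 2 * (Real.pi : ℂ) * I * τ * ((j : ℂ) * (j : ℂ) / (M : ℂ))
      = 2 * (Real.pi : ℂ) * I * τ * ((j : ℂ) ^ 2 / (M : ℂ)) from by ring]
  rw [show 2 * (Real.pi : ℂ) * I / (M : ℂ) * ((j : ℂ) * z + (j : ℂ) * z)
      = 4 * (Real.pi : ℂ) * I / (M : ℂ) * (j : ℂ) * z from by ring]
  set F1 := Complex.exp (2 * (Real.pi : ℂ) * I * τ * ((j : ℂ) ^ 2 / (M : ℂ))) with hF1
  set F2 := Complex.exp (4 * (Real.pi : ℂ) * I / (M : ℂ) * (j : ℂ) * z) with hF2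
  have hnum : -I * F1 * F2 * dedekindEta ((M : ℂ) * τ) ^ 3
        * jTheta 1 1 ((M : ℂ) * τ) (2 * (z + (j : ℂ) * τ))
      = -I * F1 * F2 * (jTheta 0 0 ((M : ℂ) * τ) (z + (j : ℂ) * τ)
          * jTheta 0 1 ((M : ℂ) * τ) (z + (j : ℂ) * τ)
          * jTheta 1 0 ((M : ℂ) * τ) (z + (j : ℂ) * τ)
          * jTheta 1 1 ((M : ℂ) * τ) (z + (j : ℂ) * τ)) := by
    linear_combination (-I * F1 * F2) * K1
  have hden : I * dedekindEta τ ^ 3 * jTheta 1 1 τ (2 * z)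
      = I * (jTheta 0 0 τ z * jTheta 0 1 τ z * jTheta 1 0 τ z * jTheta 1 1 τ z) := by
    linear_combination I * K2
  rw [hnum, hden, div_div]
  set a0 := jTheta 0 0 ((M : ℂ) * τ) (z + (j : ℂ) * τ) with ha0
  set a1 := jTheta 0 1 ((M : ℂ) * τ) (z + (j : ℂ) * τ) with ha1
  set a2 := jTheta 1 0 ((M : ℂ) * τ) (z + (j : ℂ) * τ) with ha2
  set a3 := jTheta 1 1 ((M : ℂ) * τ) (z + (j : ℂ) * τ) with ha3
  set b0 := jTheta 0 0 τ z with hb0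
  set b1 := jTheta 0 1 τ z with hb1
  set b2 := jTheta 1 0 τ z with hb2
  set b3 := jTheta 1 1 τ z with hb3
  have hD : (a3 * a3) * (I * (b0 * b1 * b2 * b3) / b3 ^ 2) ≠ 0 := by
    refine mul_ne_zero (mul_ne_zero h1 h1) (div_ne_zero ?_ (pow_ne_zero 2 h5))
    exact mul_ne_zero Complex.I_ne_zero
      (mul_ne_zero (mul_ne_zero (mul_ne_zero h2 h3) h4) h5)
  rw [div_eq_iff hD]
  simp only [div_eq_mul_inv]
  have r1 : a3 * a3⁻¹ = 1 := mul_inv_cancel₀ h1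
  have r2 : (b0*b1*b2) * (b0*b1*b2)⁻¹ = 1 :=
    mul_inv_cancel₀ (mul_ne_zero (mul_ne_zero h2 h3) h4)
  have r3 : (b3^2) * (b3^2)⁻¹ = 1 := mul_inv_cancel₀ (pow_ne_zero 2 h5)
  linear_combination (I*F1*F2*a0*a1*a2*a3) * r1
    + (I*F1*F2*a0*a1*a2*a3*a3*a3⁻¹) * r2
    + (I*F1*F2*a0*a1*a2*a3*a3*a3⁻¹*(b0*b1*b2)*(b0*b1*b2)⁻¹) * r3
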